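/- Let (τᵢ) be a sequence of nonnegative reals converging to 0, and let (xᵢ), (yᵢ), (zᵢ) be orthonormal sequences in Hilbert spaces H₁, H₂, K respectively. Then the series T(x,y) = Σᵢ τᵢ⟨x,xᵢ⟩⟨y,yᵢ⟩zᵢ converges for every (x,y) ∈ H₁ × H₂ and defines a compact bilinear operator T : H₁ × H₂ → K. -/

import Mathlib

open scoped RealInnerProductSpace
open Filter

section Aux

variable {H : Type*} [NormedAddCommGroup H] [InnerProductSpace ℝ H]

private lemma aux_sq_summable {x : ℕ → H} (hx : Orthonormal ℝ x) (a : H) :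
    Summable (fun i => ⟪a, x i⟫ ^ 2) := by
  simpa [Real.norm_eq_abs, sq_abs, real_inner_comm] using hx.inner_products_summable a

private lemma aux_sq_tsum_le {x : ℕ → H} (hx : Orthonormal ℝ x) (a : H) :
    ∑' i, ⟪a, x i⟫ ^ 2 ≤ ‖a‖ ^ 2 := by
  simpa [Real.norm_eq_abs, sq_abs, real_inner_comm] using hx.tsum_inner_products_le a

end Aux

set_option maxHeartbeats 1000000 in
theorem stmt_11 {H₁ H₂ K : Type*}
    [NormedAddCommGroup H₁] [InnerProductSpace ℝ H₁] [CompleteSpace H₁]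
    [TopologicalSpace.SeparableSpace H₁]
    [NormedAddCommGroup H₂] [InnerProductSpace ℝ H₂] [CompleteSpace H₂]
    [TopologicalSpace.SeparableSpace H₂]
    [NormedAddCommGroup K] [InnerProductSpace ℝ K] [CompleteSpace K]
    [TopologicalSpace.SeparableSpace K]
    (τ : ℕ → ℝ) (hτ0 : ∀ i, 0 ≤ τ i) (hτ : Filter.Tendsto τ Filter.atTop (nhds 0))
    (x : ℕ → H₁) (y : ℕ → H₂) (z : ℕ → K)
    (hx : Orthonormal ℝ x) (hy : Orthonormal ℝ y) (hz : Orthonormal ℝ z) :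
    ∃ T : H₁ →L[ℝ] H₂ →L[ℝ] K,
      (∀ (a : H₁) (b : H₂),
        HasSum (fun i => (τ i * ⟪a, x i⟫ * ⟪b, y i⟫) • z i) (T a b)) ∧
      IsCompact (closure ((fun p : H₁ × H₂ => T p.1 p.2) ''
        (Metric.closedBall 0 1 ×ˢ Metric.closedBall 0 1))) := by
  classical
  obtain ⟨M, hM⟩ := hτ.bddAbove_range
  have hM' : ∀ i, τ i ≤ M := fun i => hM ⟨i, rfl⟩
  have hM0 : 0 ≤ M := le_trans (hτ0 0) (hM' 0)
  have hz1 : ∀ i, ‖z i‖ = 1 := fun i => hz.1 i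
  have hnorm : ∀ (a : H₁) (b : H₂) (i : ℕ),
      ‖(τ i * ⟪a, x i⟫ * ⟪b, y i⟫) • z i‖ = τ i * |⟪a, x i⟫| * |⟪b, y i⟫| := by
    intro a b i
    rw [norm_smul, hz1 i, mul_one, Real.norm_eq_abs, abs_mul, abs_mul,
      abs_of_nonneg (hτ0 i)]
  have hbound : ∀ (a : H₁) (b : H₂) (i : ℕ),
      ‖(τ i * ⟪a, x i⟫ * ⟪b, y i⟫) • z i‖ ≤
        M * ((⟪a, x i⟫ ^ 2 + ⟪b, y i⟫ ^ 2) / 2) := by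
    intro a b i
    rw [hnorm a b i]
    nlinarith [sq_abs ⟪a, x i⟫, sq_abs ⟪b, y i⟫, sq_nonneg (|⟪a, x i⟫| - |⟪b, y i⟫|),
      hM' i, hτ0 i, hM0, abs_nonneg ⟪a, x i⟫, abs_nonneg ⟪b, y i⟫,
      mul_nonneg (abs_nonneg ⟪a, x i⟫) (abs_nonneg ⟪b, y i⟫)]
  have hsumbound : ∀ (a : H₁) (b : H₂),
      Summable (fun i => M * ((⟪a, x i⟫ ^ 2 + ⟪b, y i⟫ ^ 2) / 2)) := fun a b =>
    (((aux_sq_summable hx a).add (aux_sq_summable hy b)).div_const 2).mul_left M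
  have hsummable_norm : ∀ (a : H₁) (b : H₂),
      Summable (fun i => ‖(τ i * ⟪a, x i⟫ * ⟪b, y i⟫) • z i‖) := fun a b =>
    Summable.of_nonneg_of_le (fun i => norm_nonneg _) (hbound a b) (hsumbound a b)
  have hsummable : ∀ (a : H₁) (b : H₂),
      Summable (fun i => (τ i * ⟪a, x i⟫ * ⟪b, y i⟫) • z i) := fun a b =>
    (hsummable_norm a b).of_norm
  set g : H₁ → H₂ → K := fun a b => ∑' i, (τ i * ⟪a, x i⟫ * ⟪b, y i⟫) • z i with hg
  have hgsum : ∀ a b, HasSum (fun i => (τ i * ⟪a, x i⟫ * ⟪b, y i⟫) • z i) (g a b) :=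
    fun a b => (hsummable a b).hasSum
  have hadd1 : ∀ (a a' : H₁) (b : H₂), g (a + a') b = g a b + g a' b := by
    intro a a' b
    have h : ∀ i, (τ i * ⟪a + a', x i⟫ * ⟪b, y i⟫) • z i =
        (τ i * ⟪a, x i⟫ * ⟪b, y i⟫) • z i + (τ i * ⟪a', x i⟫ * ⟪b, y i⟫) • z i := by
      intro i
      rw [inner_add_left, ← add_smul]
      ring_nf
    show (∑' i, (τ i * ⟪a + a', x i⟫ * ⟪b, y i⟫) • z i) = _
    simp only [h]
    exact ((hgsum a b).add (hgsum a' b)).tsum_eq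
  have hsmul1 : ∀ (c : ℝ) (a : H₁) (b : H₂), g (c • a) b = c • g a b := by
    intro c a b
    have h : ∀ i, (τ i * ⟪c • a, x i⟫ * ⟪b, y i⟫) • z i =
        c • ((τ i * ⟪a, x i⟫ * ⟪b, y i⟫) • z i) := by
      intro i
      rw [real_inner_smul_left, smul_smul]
      ring_nf
    show (∑' i, (τ i * ⟪c • a, x i⟫ * ⟪b, y i⟫) • z i) = _
    simp only [h]
    exact ((hgsum a b).const_smul c).tsum_eq
  have hadd2 : ∀ (a : H₁) (b b' : H₂), g a (b + b') = g a b + g a b' := by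
    intro a b b'
    have h : ∀ i, (τ i * ⟪a, x i⟫ * ⟪b + b', y i⟫) • z i =
        (τ i * ⟪a, x i⟫ * ⟪b, y i⟫) • z i + (τ i * ⟪a, x i⟫ * ⟪b', y i⟫) • z i := by
      intro i
      rw [inner_add_left, ← add_smul]
      ring_nf
    show (∑' i, (τ i * ⟪a, x i⟫ * ⟪b + b', y i⟫) • z i) = _
    simp only [h]
    exact ((hgsum a b).add (hgsum a b')).tsum_eq
  have hsmul2 : ∀ (c : ℝ) (a : H₁) (b : H₂), g a (c • b) = c • g a b := by
    intro c a b
    have h : ∀ i, (τ i * ⟪a, x i⟫ * ⟪c • b, y i⟫) • z i =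
        c • ((τ i * ⟪a, x i⟫ * ⟪b, y i⟫) • z i) := by
      intro i
      rw [real_inner_smul_left, smul_smul]
      ring_nf
    show (∑' i, (τ i * ⟪a, x i⟫ * ⟪c • b, y i⟫) • z i) = _
    simp only [h]
    exact ((hgsum a b).const_smul c).tsum_eq
  set B : H₁ →ₗ[ℝ] H₂ →ₗ[ℝ] K := LinearMap.mk₂ ℝ g hadd1 hsmul1 hadd2 hsmul2 with hBdef
  have hBapp : ∀ a b, B a b = g a b := fun a b => rfl
  have hgbound : ∀ (a : H₁) (b : H₂), ‖g a b‖ ≤ M * ((‖a‖ ^ 2 + ‖b‖ ^ 2) / 2) := by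
    intro a b
    calc ‖g a b‖ ≤ ∑' i, ‖(τ i * ⟪a, x i⟫ * ⟪b, y i⟫) • z i‖ :=
          norm_tsum_le_tsum_norm (hsummable_norm a b)
      _ ≤ ∑' i, M * ((⟪a, x i⟫ ^ 2 + ⟪b, y i⟫ ^ 2) / 2) :=
          Summable.tsum_le_tsum (hbound a b) (hsummable_norm a b) (hsumbound a b)
      _ = M * (((∑' i, ⟪a, x i⟫ ^ 2) + ∑' i, ⟪b, y i⟫ ^ 2) / 2) := by
          rw [tsum_mul_left, tsum_div_const,
            Summable.tsum_add (aux_sq_summable hx a) (aux_sq_summable hy b)]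
      _ ≤ M * ((‖a‖ ^ 2 + ‖b‖ ^ 2) / 2) := by
          have := aux_sq_tsum_le hx a
          have := aux_sq_tsum_le hy b
          gcongr
  have hBbound : ∀ (a : H₁) (b : H₂), ‖B a b‖ ≤ M * ‖a‖ * ‖b‖ := by
    intro a b
    rcases eq_or_ne a 0 with rfl | ha
    · simp
    rcases eq_or_ne b 0 with rfl | hb
    · simp
    · have hna : (0:ℝ) < ‖a‖ := norm_pos_iff.mpr ha
      have hnb : (0:ℝ) < ‖b‖ := norm_pos_iff.mpr hb
      set u := ‖a‖⁻¹ • a with hu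
      set v := ‖b‖⁻¹ • b with hv
      have hun : ‖u‖ = 1 := norm_smul_inv_norm ha
      have hvn : ‖v‖ = 1 := norm_smul_inv_norm hb
      have hau : a = ‖a‖ • u := by
        rw [hu, smul_smul, mul_inv_cancel₀ hna.ne', one_smul]
      have hbv : b = ‖b‖ • v := by
        rw [hv, smul_smul, mul_inv_cancel₀ hnb.ne', one_smul]
      have hBab : B a b = (‖a‖ * ‖b‖) • B u v := by
        conv_lhs => rw [hau, hbv]
        rw [hBapp, hsmul1, hsmul2, ← hBapp, smul_smul]
      rw [hBab, norm_smul, Real.norm_eq_abs, abs_of_nonneg (by positivity)]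
      have h1 : ‖B u v‖ ≤ M := by
        have := hgbound u v
        rw [← hBapp] at this
        rw [hun, hvn] at this
        simpa using this
      calc ‖a‖ * ‖b‖ * ‖B u v‖ ≤ ‖a‖ * ‖b‖ * M := by gcongr
        _ = M * ‖a‖ * ‖b‖ := by ring
  refine ⟨LinearMap.mkContinuous₂ B M hBbound, fun a b => hgsum a b, ?_⟩
  -- compactness
  have htz : Tendsto (fun i => τ i • z i) atTop (nhds (0:K)) := by
    apply squeeze_zero_norm _ hτ
    intro i
    rw [norm_smul, hz1 i, mul_one, Real.norm_eq_abs, abs_of_nonneg (hτ0 i)]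
  set S : Set K := insert 0 (Set.range fun i => τ i • z i) ∪
      insert 0 (Set.range fun i => -(τ i • z i)) with hSdef
  have htzneg : Tendsto (fun i => -(τ i • z i)) atTop (nhds (0:K)) := by
    simpa using htz.neg
  have hS : IsCompact S :=
    htz.isCompact_insert_range.union htzneg.isCompact_insert_range
  have hCc : IsCompact (closure (convexHull ℝ S)) :=
    TotallyBounded.isCompact_of_isClosed
      ((totallyBounded_convexHull.mpr hS.totallyBounded).closure) isClosed_closure
  apply hCc.of_isClosed_subset isClosed_closure
  apply closure_minimal _ isClosed_closure
  rintro k ⟨⟨a, b⟩, ⟨hpa, hpb⟩, rfl⟩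
  simp only [Metric.mem_closedBall, dist_zero_right] at hpa hpb
  -- partial sums lie in the convex hull
  have hta : ∑' i, ⟪a, x i⟫ ^ 2 ≤ 1 := by
    have := aux_sq_tsum_le hx a
    nlinarith [norm_nonneg a]
  have htb : ∑' i, ⟪b, y i⟫ ^ 2 ≤ 1 := by
    have := aux_sq_tsum_le hy b
    nlinarith [norm_nonneg b]
  have hWsum : ∀ N : ℕ, ∑ i ∈ Finset.range N, |⟪a, x i⟫ * ⟪b, y i⟫| ≤ 1 := by
    intro N
    have h1 : ∑ i ∈ Finset.range N, |⟪a, x i⟫ * ⟪b, y i⟫| ≤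
        ∑ i ∈ Finset.range N, (⟪a, x i⟫ ^ 2 + ⟪b, y i⟫ ^ 2) / 2 := by
      apply Finset.sum_le_sum
      intro i _
      rw [abs_mul]
      nlinarith [sq_abs ⟪a, x i⟫, sq_abs ⟪b, y i⟫, sq_nonneg (|⟪a, x i⟫| - |⟪b, y i⟫|)]
    have h2 : ∑ i ∈ Finset.range N, (⟪a, x i⟫ ^ 2 + ⟪b, y i⟫ ^ 2) / 2 =
        ((∑ i ∈ Finset.range N, ⟪a, x i⟫ ^ 2) + ∑ i ∈ Finset.range N, ⟪b, y i⟫ ^ 2) / 2 := by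
      rw [← Finset.sum_add_distrib, Finset.sum_div]
    have h3 : ∑ i ∈ Finset.range N, ⟪a, x i⟫ ^ 2 ≤ ∑' i, ⟪a, x i⟫ ^ 2 :=
      Summable.sum_le_tsum _ (fun i _ => sq_nonneg _) (aux_sq_summable hx a)
    have h4 : ∑ i ∈ Finset.range N, ⟪b, y i⟫ ^ 2 ≤ ∑' i, ⟪b, y i⟫ ^ 2 :=
      Summable.sum_le_tsum _ (fun i _ => sq_nonneg _) (aux_sq_summable hy b)
    linarith
  have hmem : ∀ N : ℕ,
      (∑ i ∈ Finset.range N, (τ i * ⟪a, x i⟫ * ⟪b, y i⟫) • z i) ∈ convexHull ℝ S := by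
    intro N
    set w : ℕ → ℝ := fun i => if i < N then |⟪a, x i⟫ * ⟪b, y i⟫|
      else 1 - ∑ j ∈ Finset.range N, |⟪a, x j⟫ * ⟪b, y j⟫| with hw
    set v : ℕ → K := fun i => if i < N then
      (if 0 ≤ ⟪a, x i⟫ * ⟪b, y i⟫ then τ i • z i else -(τ i • z i)) else 0 with hv
    have hkey : ∑ i ∈ Finset.range (N + 1), w i • v i =
        ∑ i ∈ Finset.range N, (τ i * ⟪a, x i⟫ * ⟪b, y i⟫) • z i := by
      rw [Finset.sum_range_succ]
      have hlast : w N • v N = 0 := by simp [hw, hv]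
      rw [hlast, add_zero]
      apply Finset.sum_congr rfl
      intro i hi
      have hiN : i < N := Finset.mem_range.mp hi
      simp only [hw, hv, if_pos hiN]
      by_cases hs : 0 ≤ ⟪a, x i⟫ * ⟪b, y i⟫
      · rw [if_pos hs, abs_of_nonneg hs, smul_smul]
        congr 1
        ring
      · rw [if_neg hs, smul_neg, smul_smul, ← neg_smul]
        congr 1
        rw [abs_of_neg (lt_of_not_ge hs)]
        ring
    rw [← hkey]
    apply (convex_convexHull ℝ S).sum_mem
    · intro i _
      rcases lt_or_ge i N with hiN | hiN
      · simp only [hw, if_pos hiN]; exact abs_nonneg _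
      · simp only [hw, if_neg (not_lt.mpr hiN)]
        linarith [hWsum N]
    · rw [Finset.sum_range_succ]
      have h1 : ∑ i ∈ Finset.range N, w i = ∑ i ∈ Finset.range N, |⟪a, x i⟫ * ⟪b, y i⟫| :=
        Finset.sum_congr rfl fun i hi => by simp [hw, Finset.mem_range.mp hi]
      simp only [hw, lt_irrefl, if_neg (lt_irrefl N)]
      rw [h1]
      ring
    · intro i _
      apply subset_convexHull
      rcases lt_or_ge i N with hiN | hiN
      · simp only [hv, if_pos hiN]
        by_cases hs : 0 ≤ ⟪a, x i⟫ * ⟪b, y i⟫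
        · rw [if_pos hs]
          exact Or.inl (Set.mem_insert_of_mem _ ⟨i, rfl⟩)
        · rw [if_neg hs]
          exact Or.inr (Set.mem_insert_of_mem _ ⟨i, rfl⟩)
      · simp only [hv, if_neg (not_lt.mpr hiN)]
        exact Or.inl (Set.mem_insert _ _)
  exact mem_closure_of_tendsto ((hgsum a b).tendsto_sum_nat)
    (Filter.Eventually.of_forall hmem)
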